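/- Let X be any real random variable with half-space depth q(x) = min{P(X ≤ x), P(X ≥ x)}. For every p > 0, one has (2^p (p+1))^{-1} ≤ E[q(X)^p] ≤ 1. -/

import Mathlib

open MeasureTheory Set
open scoped ENNReal

/-- One-dimensional half-space depth of a random variable `X` (defined on `(Ω, ℙ)`):
`q(x) = min {P(X ≤ x), P(X ≥ x)}`. -/
noncomputable def depth1 {Ω : Type*} [MeasurableSpace Ω] (ℙ : Measure Ω) (X : Ω → ℝ)
    (x : ℝ) : ℝ :=
  min (ℙ {ω | X ω ≤ x}).toReal (ℙ {ω | x ≤ X ω}).toReal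

/-- The CDF transform of a random variable stochastically dominates the uniform:
`P(F(X) ≤ t) ≤ t`. -/
lemma tail_cdf_le {Ω : Type*} [MeasurableSpace Ω] (ℙ : Measure Ω) [IsProbabilityMeasure ℙ]
    (X : Ω → ℝ) (t : ℝ) :
    ℙ {ω | (ℙ {ω' | X ω' ≤ X ω}).toReal ≤ t} ≤ ENNReal.ofReal t := by
  set F : ℝ → ℝ := fun x => (ℙ {ω' | X ω' ≤ x}).toReal with hFdef
  have Fmono : Monotone F := by
    intro x y hxy
    exact ENNReal.toReal_mono (measure_ne_top _ _)
      (measure_mono fun ω h => le_trans h hxy)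
  have key : ∀ x : ℝ, F x ≤ t → ℙ {ω | X ω ≤ x} ≤ ENNReal.ofReal t := by
    intro x hx
    rw [← ENNReal.ofReal_toReal (measure_ne_top ℙ {ω | X ω ≤ x})]
    exact ENNReal.ofReal_le_ofReal hx
  set A : Set ℝ := {x | F x ≤ t} with hAdef
  have hdc : ∀ x y : ℝ, x ≤ y → y ∈ A → x ∈ A := fun x y hxy hy =>
    le_trans (Fmono hxy) hy
  have hevent : {ω | (ℙ {ω' | X ω' ≤ X ω}).toReal ≤ t} = X ⁻¹' A := rfl
  rw [hevent]
  rcases eq_empty_or_nonempty A with hAe | hAne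
  · rw [hAe]; simp
  by_cases hbdd : BddAbove A
  · set a := sSup A with ha
    by_cases hat : F a ≤ t
    · refine le_trans (measure_mono ?_) (key a hat)
      intro ω h
      exact le_csSup hbdd h
    · have hsub : X ⁻¹' A ⊆ {ω | X ω < a} := by
        intro ω h
        rcases lt_or_eq_of_le (le_csSup hbdd h) with h' | h'
        · exact h'
        · exact absurd (hdc a (X ω) h'.ge h) hat
      have hmem : ∀ n : ℕ, F (a - 1 / (n + 1)) ≤ t := by
        intro n
        have hlt : a - 1 / ((n : ℝ) + 1) < a :=
          sub_lt_self _ (by positivity)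
        obtain ⟨y, hy, hy2⟩ := exists_lt_of_lt_csSup hAne hlt
        exact hdc _ y hy2.le hy
      have hunion : {ω | X ω < a} = ⋃ n : ℕ, {ω | X ω ≤ a - 1 / (n + 1)} := by
        ext ω
        simp only [mem_iUnion, mem_setOf_eq]
        constructor
        · intro h
          obtain ⟨n, hn⟩ := exists_nat_one_div_lt (sub_pos.mpr h)
          exact ⟨n, by linarith⟩
        · rintro ⟨n, hn⟩
          have : (0 : ℝ) < 1 / ((n : ℝ) + 1) := by positivity
          linarith
      have hmono : Monotone fun n : ℕ => {ω | X ω ≤ a - 1 / (n + 1)} := by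
        intro m n hmn ω h
        have h1 : (1 : ℝ) / ((n : ℝ) + 1) ≤ 1 / ((m : ℝ) + 1) := by
          apply one_div_le_one_div_of_le (by positivity)
          have : (m : ℝ) ≤ n := Nat.cast_le.mpr hmn
          linarith
        simp only [mem_setOf_eq] at h ⊢
        linarith
      calc ℙ (X ⁻¹' A) ≤ ℙ {ω | X ω < a} := measure_mono hsub
        _ = ⨆ n : ℕ, ℙ {ω | X ω ≤ a - 1 / (n + 1)} := by
            rw [hunion]
            exact Directed.measure_iUnion hmono.directed_le
        _ ≤ ENNReal.ofReal t := iSup_le fun n => key _ (hmem n)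
  · have hAuniv : A = univ := by
      apply eq_univ_of_forall
      intro x
      obtain ⟨y, hy, hxy⟩ := not_bddAbove_iff.mp hbdd x
      exact hdc x y hxy.le hy
    have huniv : (univ : Set Ω) = ⋃ n : ℕ, {ω | X ω ≤ (n : ℝ)} := by
      ext ω
      simp only [mem_univ, mem_iUnion, mem_setOf_eq, true_iff]
      exact exists_nat_ge (X ω)
    have hmono : Monotone fun n : ℕ => {ω | X ω ≤ (n : ℝ)} := by
      intro m n hmn ω h
      simp only [mem_setOf_eq] at h ⊢
      exact le_trans h (Nat.cast_le.mpr hmn)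
    calc ℙ (X ⁻¹' A) ≤ ℙ univ := measure_mono (subset_univ _)
      _ = ⨆ n : ℕ, ℙ {ω | X ω ≤ (n : ℝ)} := by
          rw [huniv]
          exact Directed.measure_iUnion hmono.directed_le
      _ ≤ ENNReal.ofReal t := by
          refine iSup_le fun n => key _ ?_
          exact (hAuniv ▸ mem_univ ((n : ℝ)) : ((n : ℝ)) ∈ A)

/-- For any real random variable `X` and any `p > 0`,
`(2^p (p+1))⁻¹ ≤ E[q(X)^p] ≤ 1`. -/
theorem depth_pos_moments {Ω : Type*} [MeasurableSpace Ω]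
    (ℙ : Measure Ω) [IsProbabilityMeasure ℙ] (X : Ω → ℝ) (hX : Measurable X)
    (p : ℝ) (hp : 0 < p) :
    ((2 : ℝ) ^ p * (p + 1))⁻¹ ≤ ∫ ω, (depth1 ℙ X (X ω)) ^ p ∂ℙ ∧
      ∫ ω, (depth1 ℙ X (X ω)) ^ p ∂ℙ ≤ 1 := by
  set g : Ω → ℝ := fun ω => depth1 ℙ X (X ω) with hgdef
  -- basic properties of g
  have g_nn : ∀ ω, 0 ≤ g ω := fun ω =>
    le_min ENNReal.toReal_nonneg ENNReal.toReal_nonneg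
  have g_le_one : ∀ ω, g ω ≤ 1 := by
    intro ω
    refine min_le_of_left_le ?_
    have h1 : ℙ {ω' | X ω' ≤ X ω} ≤ 1 := prob_le_one
    calc (ℙ {ω' | X ω' ≤ X ω}).toReal ≤ (1 : ℝ≥0∞).toReal :=
          ENNReal.toReal_mono ENNReal.one_ne_top h1
      _ = 1 := by simp
  -- measurability of g
  have Fmono : Monotone fun x : ℝ => (ℙ {ω | X ω ≤ x}).toReal := by
    intro x y hxy
    exact ENNReal.toReal_mono (measure_ne_top _ _)
      (measure_mono fun ω h => le_trans h hxy)
  have Santi : Antitone fun x : ℝ => (ℙ {ω | x ≤ X ω}).toReal := by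
    intro x y hxy
    exact ENNReal.toReal_mono (measure_ne_top _ _)
      (measure_mono fun ω h => le_trans hxy h)
  have g_meas : Measurable g :=
    Measurable.min (Fmono.measurable.comp hX) (Santi.measurable.comp hX)
  have gp_meas : Measurable fun ω => g ω ^ p :=
    (Real.continuous_rpow_const hp.le).measurable.comp g_meas
  have gp_nn : ∀ ω, 0 ≤ g ω ^ p := fun ω => Real.rpow_nonneg (g_nn ω) p
  have gp_le_one : ∀ ω, g ω ^ p ≤ 1 := fun ω =>
    Real.rpow_le_one (g_nn ω) (g_le_one ω) hp.le
  have hint : Integrable (fun ω => g ω ^ p) ℙ := by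
    refine (integrable_const (1 : ℝ)).mono' gp_meas.aestronglyMeasurable ?_
    filter_upwards with ω
    rw [Real.norm_eq_abs, abs_of_nonneg (gp_nn ω)]
    exact gp_le_one ω
  constructor
  · -- lower bound
    have tailF : ∀ t : ℝ,
        ℙ {ω | (ℙ {ω' | X ω' ≤ X ω}).toReal ≤ t} ≤ ENNReal.ofReal t :=
      tail_cdf_le ℙ X
    have tailS : ∀ t : ℝ,
        ℙ {ω | (ℙ {ω' | X ω ≤ X ω'}).toReal ≤ t} ≤ ENNReal.ofReal t := by
      intro t
      have := tail_cdf_le ℙ (fun ω => -X ω) t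
      simpa only [neg_le_neg_iff] using this
    have tail_min : ∀ t : ℝ, 0 ≤ t → ℙ {ω | g ω ≤ t} ≤ ENNReal.ofReal (2 * t) := by
      intro t ht
      have hsub : {ω | g ω ≤ t} ⊆
          {ω | (ℙ {ω' | X ω' ≤ X ω}).toReal ≤ t} ∪
            {ω | (ℙ {ω' | X ω ≤ X ω'}).toReal ≤ t} := by
        intro ω h
        have h' : min (ℙ {ω' | X ω' ≤ X ω}).toReal (ℙ {ω' | X ω ≤ X ω'}).toReal ≤ t := h
        rcases min_le_iff.mp h' with h'' | h''
        · exact Or.inl h''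
        · exact Or.inr h''
      calc ℙ {ω | g ω ≤ t} ≤ _ := measure_mono hsub
        _ ≤ ℙ {ω | (ℙ {ω' | X ω' ≤ X ω}).toReal ≤ t} +
              ℙ {ω | (ℙ {ω' | X ω ≤ X ω'}).toReal ≤ t} := measure_union_le _ _
        _ ≤ ENNReal.ofReal t + ENNReal.ofReal t := add_le_add (tailF t) (tailS t)
        _ = ENNReal.ofReal (2 * t) := by
            rw [two_mul, ENNReal.ofReal_add ht ht]
    have tail_ge : ∀ t ∈ Ioo (0 : ℝ) (1 / 2),
        ENNReal.ofReal (1 - 2 * t) ≤ ℙ {a | t ≤ g a} := by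
      intro t ht
      have hmeas : MeasurableSet {ω | g ω < t} := measurableSet_lt g_meas measurable_const
      have hcompl : {a | t ≤ g a} = {ω | g ω < t}ᶜ := by
        ext ω; simp [not_lt]
      rw [hcompl, measure_compl hmeas (measure_ne_top _ _), measure_univ]
      have hss : {ω | g ω < t} ⊆ {ω | g ω ≤ t} := by
        intro ω h
        simp only [mem_setOf_eq] at h ⊢
        exact le_of_lt h
      have h1 : ℙ {ω | g ω < t} ≤ ENNReal.ofReal (2 * t) :=
        le_trans (measure_mono hss) (tail_min t ht.1.le)
      have h2 : ENNReal.ofReal (1 - 2 * t) = 1 - ENNReal.ofReal (2 * t) := by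
        rw [ENNReal.ofReal_sub _ (by linarith [ht.1]), ENNReal.ofReal_one]
      rw [h2]
      exact tsub_le_tsub_left h1 1
    -- layer cake
    have layer := lintegral_rpow_eq_lintegral_meas_le_mul ℙ
      (Filter.Eventually.of_forall g_nn) g_meas.aemeasurable hp
    -- the real integrand on (0, 1/2)
    set f : ℝ → ℝ := fun t => (1 - 2 * t) * t ^ (p - 1) with hfdef
    have hpt : ∀ t : ℝ, 0 ≤ t → f t = t ^ (p - 1) - 2 * t ^ p := by
      intro t ht
      rcases eq_or_lt_of_le ht with h0 | h0
      · rw [hfdef]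
        simp only [← h0, Real.zero_rpow hp.ne']
        ring
      · have hadd := Real.rpow_add h0 (p - 1) 1
        have h1 : p - 1 + 1 = p := by ring
        rw [h1, Real.rpow_one] at hadd
        rw [hfdef]
        simp only []
        rw [hadd]
        ring
    have ha : IntervalIntegrable (fun t : ℝ => t ^ (p - 1)) volume 0 (1 / 2) :=
      intervalIntegral.intervalIntegrable_rpow' (by linarith)
    have hb : IntervalIntegrable (fun t : ℝ => t ^ p) volume 0 (1 / 2) :=
      intervalIntegral.intervalIntegrable_rpow' (by linarith)
    have hf_ii : IntervalIntegrable f volume 0 (1 / 2) := by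
      have : IntervalIntegrable (fun t : ℝ => t ^ (p - 1) - 2 * t ^ p) volume 0 (1 / 2) :=
        ha.sub (hb.const_mul 2)
      refine this.congr_ae ?_
      rw [Filter.EventuallyEq, ae_restrict_iff' measurableSet_uIoc]
      filter_upwards with t ht
      rw [uIoc_of_le (by norm_num : (0 : ℝ) ≤ 1 / 2)] at ht
      exact (hpt t ht.1.le).symm
    have hIntOn : IntegrableOn f (Ioo (0 : ℝ) (1 / 2)) volume := by
      have := (intervalIntegrable_iff_integrableOn_Ioc_of_le (by norm_num)).mp hf_ii
      exact this.mono_set Ioo_subset_Ioc_self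
    have hval : ∫ t in Ioo (0 : ℝ) (1 / 2), f t =
        (1 / 2 : ℝ) ^ p / p - 2 * ((1 / 2 : ℝ) ^ (p + 1) / (p + 1)) := by
      rw [← integral_Ioc_eq_integral_Ioo,
        ← intervalIntegral.integral_of_le (by norm_num : (0 : ℝ) ≤ 1 / 2)]
      have hcongr : ∫ t in (0 : ℝ)..(1 / 2), f t =
          ∫ t in (0 : ℝ)..(1 / 2), (t ^ (p - 1) - 2 * t ^ p) := by
        refine intervalIntegral.integral_congr ?_
        intro t ht
        rw [uIcc_of_le (by norm_num : (0 : ℝ) ≤ 1 / 2)] at ht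
        exact hpt t ht.1
      rw [hcongr, intervalIntegral.integral_sub ha (hb.const_mul 2),
        intervalIntegral.integral_const_mul,
        integral_rpow (Or.inl (by linarith : (-1 : ℝ) < p - 1)),
        integral_rpow (Or.inl (by linarith : (-1 : ℝ) < p))]
      have h1 : p - 1 + 1 = p := by ring
      rw [h1, Real.zero_rpow hp.ne', Real.zero_rpow (by linarith : p + 1 ≠ 0)]
      ring
    have hf_nn : ∀ᵐ t ∂(volume.restrict (Ioo (0 : ℝ) (1 / 2))), 0 ≤ f t := by
      rw [ae_restrict_iff' measurableSet_Ioo]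
      filter_upwards with t ht
      have : (0 : ℝ) ≤ 1 - 2 * t := by linarith [ht.2]
      exact mul_nonneg this (Real.rpow_nonneg ht.1.le _)
    have hofReal : ENNReal.ofReal (∫ t in Ioo (0 : ℝ) (1 / 2), f t) =
        ∫⁻ t in Ioo (0 : ℝ) (1 / 2), ENNReal.ofReal (f t) :=
      ofReal_integral_eq_lintegral_ofReal hIntOn hf_nn
    have step1 : ∫⁻ t in Ioo (0 : ℝ) (1 / 2), ENNReal.ofReal (f t) ≤
        ∫⁻ t in Ioi (0 : ℝ), ℙ {a | t ≤ g a} * ENNReal.ofReal (t ^ (p - 1)) := by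
      calc ∫⁻ t in Ioo (0 : ℝ) (1 / 2), ENNReal.ofReal (f t)
          ≤ ∫⁻ t in Ioo (0 : ℝ) (1 / 2),
              ℙ {a | t ≤ g a} * ENNReal.ofReal (t ^ (p - 1)) := ?_
        _ ≤ ∫⁻ t in Ioi (0 : ℝ), ℙ {a | t ≤ g a} * ENNReal.ofReal (t ^ (p - 1)) :=
            lintegral_mono_set Ioo_subset_Ioi_self
      refine lintegral_mono_ae ?_
      rw [ae_restrict_iff' measurableSet_Ioo]
      filter_upwards with t ht
      rw [hfdef]
      simp only []
      rw [ENNReal.ofReal_mul (by linarith [ht.2] : (0 : ℝ) ≤ 1 - 2 * t)]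
      exact mul_le_mul' (tail_ge t ht) le_rfl
    have hpI : p * ((1 / 2 : ℝ) ^ p / p - 2 * ((1 / 2 : ℝ) ^ (p + 1) / (p + 1))) =
        ((2 : ℝ) ^ p * (p + 1))⁻¹ := by
      have h2 : (0 : ℝ) < 2 ^ p := Real.rpow_pos_of_pos two_pos p
      have hhalf : (1 / 2 : ℝ) ^ p = ((2 : ℝ) ^ p)⁻¹ := by
        rw [one_div, Real.inv_rpow (by norm_num : (0 : ℝ) ≤ 2)]
      have hhalf1 : (1 / 2 : ℝ) ^ (p + 1) = ((2 : ℝ) ^ p)⁻¹ / 2 := by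
        rw [Real.rpow_add (by norm_num : (0 : ℝ) < 1 / 2), Real.rpow_one, hhalf]
        ring
      rw [hhalf, hhalf1]
      field_simp
      ring
    have hC : ENNReal.ofReal (((2 : ℝ) ^ p * (p + 1))⁻¹) ≤
        ∫⁻ ω, ENNReal.ofReal (g ω ^ p) ∂ℙ := by
      rw [layer]
      calc ENNReal.ofReal (((2 : ℝ) ^ p * (p + 1))⁻¹)
          = ENNReal.ofReal p *
              ENNReal.ofReal ((1 / 2 : ℝ) ^ p / p - 2 * ((1 / 2 : ℝ) ^ (p + 1) / (p + 1))) := by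
            rw [← ENNReal.ofReal_mul hp.le, hpI]
        _ ≤ ENNReal.ofReal p *
              ∫⁻ t in Ioi (0 : ℝ), ℙ {a | t ≤ g a} * ENNReal.ofReal (t ^ (p - 1)) := by
            refine mul_le_mul' le_rfl ?_
            rw [← hval, hofReal]
            exact step1
    have hfin : ∫⁻ ω, ENNReal.ofReal (g ω ^ p) ∂ℙ ≠ ⊤ := by
      have hle : ∫⁻ ω, ENNReal.ofReal (g ω ^ p) ∂ℙ ≤ 1 := by
        calc ∫⁻ ω, ENNReal.ofReal (g ω ^ p) ∂ℙ ≤ ∫⁻ _ω, (1 : ℝ≥0∞) ∂ℙ :=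
              lintegral_mono fun ω => ENNReal.ofReal_le_one.mpr (gp_le_one ω)
          _ = 1 := by simp
      exact ne_top_of_le_ne_top ENNReal.one_ne_top hle
    rw [integral_eq_lintegral_of_nonneg_ae (Filter.Eventually.of_forall gp_nn)
      gp_meas.aestronglyMeasurable]
    exact (ENNReal.ofReal_le_iff_le_toReal hfin).mp hC
  · -- upper bound
    calc ∫ ω, g ω ^ p ∂ℙ ≤ ∫ _ω, (1 : ℝ) ∂ℙ :=
          integral_mono hint (integrable_const 1) gp_le_one
      _ = 1 := by simp
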